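/- Assume the base hypotheses and Condition (M). If lim_{t→∞} g(t)/(f∘F⁻¹)(t) = 0, then the unique continuous solution x of x'(t) = -f(x(t)) + g(t), x(0) = ξ > 0, satisfies lim_{t→∞} F(x(t))/t = 1. -/

import Mathlib

open Filter Real Set Topology MeasureTheory

noncomputable section

/-- A function `f : (0,∞) → (0,∞)` is regularly varying at `0` with index `β` if
`f(λx)/f(x) → λ^β` as `x → 0⁺` for every `λ > 0`. -/
def RVat0 (f : ℝ → ℝ) (β : ℝ) : Prop :=
  ∀ lam : ℝ, 0 < lam →
    Tendsto (fun x => f (lam * x) / f x) (nhdsWithin 0 (Set.Ioi 0)) (nhds (lam ^ β))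

/-- A function `h : (0,∞) → (0,∞)` is regularly varying at `∞` with index `α` if
`h(λt)/h(t) → λ^α` as `t → ∞` for every `λ > 0`. -/
def RVatInf (h : ℝ → ℝ) (α : ℝ) : Prop :=
  ∀ lam : ℝ, 0 < lam →
    Tendsto (fun t => h (lam * t) / h t) atTop (nhds (lam ^ α))

/-- A continuous solution of the perturbed ODE `x'(t) = -f(x(t)) + g(t)`, `t > 0`,
with initial condition `x(0) = ξ`. -/
def IsSol (f g : ℝ → ℝ) (ξ : ℝ) (x : ℝ → ℝ) : Prop :=
  ContinuousOn x (Set.Ici 0) ∧ x 0 = ξ ∧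
    ∀ t : ℝ, 0 < t → HasDerivAt x (-f (x t) + g t) t

/-- First-crossing barrier lemma: if `y T ≤ 0` and at every contact point (`y t = 0`)
the derivative of `y` is negative, then `y t₁ ≤ 0`. -/
lemma barrier_aux {y : ℝ → ℝ} {T t₁ : ℝ} (hT : T ≤ t₁)
    (hy : ContinuousOn y (Set.Icc T t₁))
    (hT0 : y T ≤ 0)
    (hderiv : ∀ t, T ≤ t → t < t₁ → y t = 0 → ∃ y', HasDerivAt y y' t ∧ y' < 0) :
    y t₁ ≤ 0 := by
  by_contra hpos
  push_neg at hpos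
  set S : Set ℝ := {t ∈ Set.Icc T t₁ | y t ≤ 0} with hS
  have hSne : S.Nonempty := ⟨T, ⟨le_refl T, hT⟩, hT0⟩
  have hSbdd : BddAbove S := ⟨t₁, fun t ht => ht.1.2⟩
  have hSclosed : IsClosed S := by
    have : S = Set.Icc T t₁ ∩ y ⁻¹' Set.Iic 0 := by
      ext t; simp [hS, Set.mem_sep_iff, Set.mem_preimage]
    rw [this]
    exact hy.preimage_isClosed_of_isClosed isClosed_Icc isClosed_Iic
  have hrS : sSup S ∈ S := hSclosed.csSup_mem hSne hSbdd
  set r := sSup S with hr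
  have hrI : r ∈ Set.Icc T t₁ := hrS.1
  have hrle : y r ≤ 0 := hrS.2
  have hrlt : r < t₁ := hrI.2.lt_of_ne (fun h => absurd hrle (by rw [h]; exact not_le.mpr hpos))
  have hgt : ∀ t, r < t → t ≤ t₁ → 0 < y t := by
    intro t hrt htt
    by_contra hle
    push_neg at hle
    have : t ∈ S := ⟨⟨le_trans hrI.1 hrt.le, htt⟩, hle⟩
    exact absurd (le_csSup hSbdd this) (not_le.mpr hrt)
  have hne : (𝓝[Set.Ioc r t₁] r).NeBot := by
    apply mem_closure_iff_nhdsWithin_neBot.mp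
    rw [closure_Ioc hrlt.ne]
    exact Set.left_mem_Icc.mpr hrlt.le
  have htends : Filter.Tendsto y (𝓝[Set.Ioc r t₁] r) (𝓝 (y r)) :=
    (hy r hrI).mono (fun t ht => ⟨le_trans hrI.1 ht.1.le, ht.2⟩)
  have hge : 0 ≤ y r :=
    ge_of_tendsto htends (eventually_mem_nhdsWithin.mono (fun t ht => (hgt t ht.1 ht.2).le))
  have hy0 : y r = 0 := le_antisymm hrle hge
  obtain ⟨y', hd, hneg⟩ := hderiv r hrI.1 hrlt hy0
  have hslope : Filter.Tendsto (slope y r) (𝓝[Set.Ioc r t₁] r) (𝓝 y') :=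
    (hasDerivAt_iff_tendsto_slope.mp hd).mono_left
      (nhdsWithin_mono _ (fun t ht => ne_of_gt ht.1))
  have : 0 ≤ y' := by
    refine ge_of_tendsto hslope (eventually_mem_nhdsWithin.mono (fun t ht => ?_))
    have h1 : 0 < y t := hgt t ht.1 ht.2
    have h2 : 0 < t - r := sub_pos.mpr ht.1
    rw [slope_def_field, hy0, sub_zero]
    exact div_nonneg h1.le h2.le
  exact absurd this (not_le.mpr hneg)

set_option maxHeartbeats 2000000 in
/-- Theorem 2.2 (Theorem `gsmall`): under the base hypotheses and Condition (M), if
`g(t)/(f∘F⁻¹)(t) → 0` as `t → ∞`, then the unique continuous solution of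
`x' = -f(x) + g`, `x(0) = ξ > 0`, obeys `F(x(t))/t → 1` as `t → ∞`. -/
theorem stmt_1
    (f g F Finv : ℝ → ℝ) (ξ : ℝ) (x : ℝ → ℝ)
    (hf_cont : Continuous f) (hf_lip : LocallyLipschitz f)
    (hf_sign : ∀ y : ℝ, y ≠ 0 → 0 < y * f y) (hf_zero : f 0 = 0)
    (hg_cont : ContinuousOn g (Set.Ici 0)) (hg_pos : ∀ t : ℝ, 0 < t → 0 < g t)
    (hF : ∀ y : ℝ, 0 < y → F y = ∫ u in y..(1:ℝ), 1 / f u)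
    (hF_top : Tendsto F (nhdsWithin 0 (Set.Ioi 0)) atTop)
    (hF_anti : StrictAntiOn F (Set.Ioi 0))
    (hFinv : ∀ t : ℝ, 0 ≤ t → 0 < Finv t ∧ F (Finv t) = t)
    (hFinv_to0 : Tendsto Finv atTop (nhds 0))
    (hξ : 0 < ξ) (hx : IsSol f g ξ x)
    (hM : ∃ δ : ℝ, 0 < δ ∧ ∃ φ : ℝ → ℝ, StrictMonoOn φ (Set.Ioo 0 δ) ∧
      Tendsto (fun y => f y / φ y) (nhdsWithin 0 (Set.Ioi 0)) (nhds 1))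
    (hL0 : Tendsto (fun t => g t / f (Finv t)) atTop (nhds 0)) :
    Tendsto (fun t => F (x t) / t) atTop (nhds 1) := by
  obtain ⟨xc, x0, xd⟩ := hx
  -- positivity of f
  have fpos : ∀ y : ℝ, 0 < y → 0 < f y := by
    intro y hy
    have h := hf_sign y hy.ne'
    nlinarith
  have fnonneg : ∀ y : ℝ, 0 ≤ y → 0 ≤ f y := by
    intro y hy
    rcases eq_or_lt_of_le hy with h | h
    · simp [← h, hf_zero]
    · exact (fpos y h).le
  -- the derivative of F
  have Fderiv : ∀ y : ℝ, 0 < y → HasDerivAt F (-(f y)⁻¹) y := by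
    intro y hy
    have hsub : Set.uIcc y 1 ⊆ Set.Ioi 0 := by
      intro u hu
      rcases Set.mem_uIcc.mp hu with h | h <;> simp only [Set.mem_Ioi] <;> linarith [h.1]
    have hcont : ContinuousOn (fun u => 1 / f u) (Set.uIcc y 1) := by
      apply ContinuousOn.div continuousOn_const hf_cont.continuousOn
      intro u hu
      exact (fpos u (hsub hu)).ne'
    have hint : IntervalIntegrable (fun u => 1 / f u) MeasureTheory.volume y 1 :=
      hcont.intervalIntegrable
    have hmeas : StronglyMeasurableAtFilter (fun u => 1 / f u) (nhds y) := by
      apply StronglyMeasurable.stronglyMeasurableAtFilter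
      exact (measurable_const.div hf_cont.measurable).stronglyMeasurable
    have hca : ContinuousAt (fun u => 1 / f u) y := by
      apply ContinuousAt.div continuousAt_const hf_cont.continuousAt (fpos y hy).ne'
    have hd := intervalIntegral.integral_hasDerivAt_left hint hmeas hca
    have heq : F =ᶠ[nhds y] fun u => ∫ v in u..(1:ℝ), 1 / f v := by
      filter_upwards [IsOpen.mem_nhds isOpen_Ioi hy] with u hu
      exact hF u hu
    simpa [one_div] using hd.congr_of_eventuallyEq heq
  have Fanti_le : ∀ a b : ℝ, 0 < a → a ≤ b → F b ≤ F a := by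
    intro a b ha hab
    rcases eq_or_lt_of_le hab with h | h
    · rw [h]
    · exact (hF_anti (Set.mem_Ioi.mpr ha) (Set.mem_Ioi.mpr (ha.trans h)) h).le
  have Finv_pos : ∀ t : ℝ, 0 ≤ t → 0 < Finv t := fun t ht => (hFinv t ht).1
  have FFinv : ∀ t : ℝ, 0 ≤ t → F (Finv t) = t := fun t ht => (hFinv t ht).2
  have FinvF : ∀ y : ℝ, 0 < y → 0 ≤ F y → Finv (F y) = y := by
    intro y hy hFy
    have h1 : F (Finv (F y)) = F y := FFinv _ hFy
    exact hF_anti.injOn (Set.mem_Ioi.mpr (Finv_pos _ hFy)) (Set.mem_Ioi.mpr hy) h1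
  have Finv_anti : ∀ s t : ℝ, 0 ≤ s → s ≤ t → Finv t ≤ Finv s := by
    intro s t hs hst
    by_contra h
    push_neg at h
    have := hF_anti (Set.mem_Ioi.mpr (Finv_pos s hs)) (Set.mem_Ioi.mpr (Finv_pos t (hs.trans hst))) h
    rw [FFinv s hs, FFinv t (hs.trans hst)] at this
    linarith
  have Finv_strict_anti : ∀ s t : ℝ, 0 ≤ s → s < t → Finv t < Finv s := by
    intro s t hs hst
    refine lt_of_le_of_ne (Finv_anti s t hs hst.le) (fun h => ?_)
    have := congrArg F h
    rw [FFinv s hs, FFinv t (hs.trans hst.le)] at this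
    linarith
  have FinvCont : ∀ s : ℝ, 0 < s → ContinuousAt Finv s := by
    intro s hs
    rw [ContinuousAt]
    refine tendsto_order.2 ⟨fun a ha => ?_, fun b hb => ?_⟩
    · rcases le_or_gt a 0 with ha0 | ha0
      · filter_upwards [IsOpen.mem_nhds isOpen_Ioi hs] with t ht
        exact lt_of_le_of_lt ha0 (Finv_pos t (le_of_lt ht))
      · have hFa : s < F a := by
          have := hF_anti (Set.mem_Ioi.mpr ha0) (Set.mem_Ioi.mpr (Finv_pos s hs.le)) ha
          rwa [FFinv s hs.le] at this
        filter_upwards [IsOpen.mem_nhds isOpen_Ioi hs,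
          IsOpen.mem_nhds isOpen_Iio hFa] with t ht1 ht2
        simp only [Set.mem_Ioi, Set.mem_Iio] at ht1 ht2
        by_contra h
        push_neg at h
        have := Fanti_le (Finv t) a (Finv_pos t (le_of_lt ht1)) h
        rw [FFinv t (le_of_lt ht1)] at this
        linarith
    · have hb0 : 0 < b := lt_trans (Finv_pos s hs.le) hb
      have hFb : F b < s := by
        have := hF_anti (Set.mem_Ioi.mpr (Finv_pos s hs.le)) (Set.mem_Ioi.mpr hb0) hb
        rwa [FFinv s hs.le] at this
      filter_upwards [IsOpen.mem_nhds isOpen_Ioi hs,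
        IsOpen.mem_nhds isOpen_Ioi hFb] with t ht1 ht2
      simp only [Set.mem_Ioi] at ht1 ht2
      by_contra h
      push_neg at h
      have := Fanti_le b (Finv t) hb0 h
      rw [FFinv t (le_of_lt ht1)] at this
      linarith
  have Finv_deriv : ∀ s : ℝ, 0 < s → HasDerivAt Finv (-f (Finv s)) s := by
    intro s hs
    have hfg : ∀ᶠ y in nhds s, F (Finv y) = y := by
      filter_upwards [IsOpen.mem_nhds isOpen_Ioi hs] with t ht
      exact FFinv t (le_of_lt ht)
    have hd := HasDerivAt.of_local_left_inverse (FinvCont s hs)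
      (Fderiv (Finv s) (Finv_pos s hs.le)) (by
        simp only [ne_eq, neg_eq_zero, inv_eq_zero]
        exact (fpos _ (Finv_pos s hs.le)).ne') hfg
    rw [inv_neg, inv_inv] at hd
    exact hd
  -- positivity and lower bound for x
  set C : ℝ := max (F ξ) 0 + 1 with hC
  have hC0 : 0 < C := by positivity
  have hFinvC : Finv C < ξ := by
    have h1 : Finv (max (F ξ) 0) ≤ ξ := by
      rcases le_total 0 (F ξ) with h | h
      · rw [max_eq_left h, FinvF ξ hξ h]
      · rw [max_eq_right h]
        by_contra hcon
        push_neg at hcon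
        have := hF_anti (Set.mem_Ioi.mpr hξ) (Set.mem_Ioi.mpr (Finv_pos 0 le_rfl)) hcon
        rw [FFinv 0 le_rfl] at this
        linarith
    calc Finv C < Finv (max (F ξ) 0) :=
          Finv_strict_anti _ _ (le_max_right _ _) (by rw [hC]; linarith)
      _ ≤ ξ := h1
  have xlow : ∀ t : ℝ, 0 ≤ t → Finv (t + C) ≤ x t := by
    intro t₁ ht₁
    have key := barrier_aux (y := fun t => Finv (t + C) - x t) (T := 0) (t₁ := t₁) ht₁
      ?_ ?_ ?_
    · have key' : Finv (t₁ + C) - x t₁ ≤ 0 := key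
      linarith
    · intro t ht
      have htC : 0 < t + C := by linarith [ht.1]
      have h1 : ContinuousAt (Finv ∘ fun u => u + C) t :=
        ContinuousAt.comp (FinvCont (t + C) htC) ((continuous_add_right C).continuousAt)
      exact (h1.continuousWithinAt).sub ((xc.mono (fun u (hu : u ∈ Set.Icc 0 t₁) => hu.1)) t ht)
    · show Finv (0 + C) - x 0 ≤ 0
      rw [x0, zero_add]
      linarith
    · intro t ht0 htt1 hcontact
      have hc' : Finv (t + C) - x t = 0 := hcontact
      have ht0' : 0 < t := by
        rcases eq_or_lt_of_le ht0 with h | h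
        · exfalso
          rw [← h, x0, zero_add] at hc'
          linarith
        · exact h
      have htC : 0 < t + C := by linarith
      have hdF : HasDerivAt (fun u => Finv (u + C)) (-f (Finv (t + C)) * 1) t :=
        (Finv_deriv (t + C) htC).comp t ((hasDerivAt_id t).add_const C)
      refine ⟨-f (Finv (t + C)) * 1 - (-f (x t) + g t), hdF.sub (xd t ht0'), ?_⟩
      have hxt : Finv (t + C) = x t := by linarith
      rw [hxt]
      have := hg_pos t ht0'
      ring_nf
      linarith
  have xpos : ∀ t : ℝ, 0 ≤ t → 0 < x t := fun t ht =>
    lt_of_lt_of_le (Finv_pos (t + C) (by linarith)) (xlow t ht)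
  have uupper : ∀ t : ℝ, 0 ≤ t → F (x t) ≤ t + C := by
    intro t ht
    have h1 := Fanti_le (Finv (t + C)) (x t) (Finv_pos (t + C) (by linarith)) (xlow t ht)
    rwa [FFinv (t + C) (by linarith)] at h1
  -- g tends to 0
  have fFinv_pos : ∀ t : ℝ, 0 ≤ t → 0 < f (Finv t) := fun t ht => fpos _ (Finv_pos t ht)
  have fFinv_to0 : Tendsto (fun t => f (Finv t)) atTop (nhds 0) := by
    have := (hf_cont.continuousAt (x := 0)).tendsto.comp hFinv_to0
    rwa [hf_zero] at this
  have g_to0 : Tendsto g atTop (nhds 0) := by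
    have h1 : Tendsto (fun t => (g t / f (Finv t)) * f (Finv t)) atTop (nhds 0) := by
      simpa using hL0.mul fFinv_to0
    refine h1.congr' ?_
    filter_upwards [eventually_ge_atTop (0 : ℝ)] with t ht
    exact div_mul_cancel₀ (g t) (fFinv_pos t ht).ne'
  -- boundedness of x
  obtain ⟨T₀, hT₀⟩ : ∃ T₀ : ℝ, 1 ≤ T₀ ∧ ∀ t ≥ T₀, g t ≤ f (Finv t) := by
    have h1 := Metric.tendsto_nhds.mp hL0 1 one_pos
    rw [eventually_atTop] at h1
    obtain ⟨T, hT⟩ := h1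
    refine ⟨max T 1, le_max_right _ _, fun t ht => ?_⟩
    have ht0 : (0 : ℝ) ≤ t := le_trans (le_trans one_pos.le (le_max_right T 1)) ht
    have h2 := hT t (le_trans (le_max_left T 1) ht)
    rw [Real.dist_eq, sub_zero] at h2
    have h3 : g t / f (Finv t) < 1 := lt_of_le_of_lt (le_abs_self _) h2
    rw [div_lt_one (fFinv_pos t ht0)] at h3
    exact h3.le
  obtain ⟨hT₀1, hT₀g⟩ := hT₀
  have hT₀0 : (0:ℝ) < T₀ := lt_of_lt_of_le one_pos hT₀1
  have wanti : AntitoneOn (fun t => x t + Finv t) (Set.Ici T₀) := by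
    apply antitoneOn_of_deriv_nonpos (convex_Ici T₀)
    · intro t ht
      have ht0 : (0:ℝ) < t := lt_of_lt_of_le hT₀0 ht
      exact ((xc.mono (fun u (hu : u ∈ Set.Ici T₀) => le_trans hT₀0.le hu)) t ht).add
        (FinvCont t ht0).continuousWithinAt
    · intro t ht
      rw [interior_Ici] at ht
      have ht0 : (0:ℝ) < t := lt_trans hT₀0 ht
      exact (((xd t ht0).add (Finv_deriv t ht0)).differentiableAt).differentiableWithinAt
    · intro t ht
      rw [interior_Ici] at ht
      have ht0 : (0:ℝ) < t := lt_trans hT₀0 ht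
      have hd := (xd t ht0).add (Finv_deriv t ht0)
      rw [(HasDerivAt.deriv hd : deriv (fun t => x t + Finv t) t = _)]
      have h1 := hT₀g t (le_of_lt ht)
      have h2 := fpos (x t) (xpos t ht0.le)
      linarith
  obtain ⟨p, hp, hpmax⟩ := (isCompact_Icc (a := (0:ℝ)) (b := T₀)).exists_isMaxOn
    (Set.nonempty_Icc.mpr hT₀0.le) (xc.mono (fun u (hu : u ∈ Set.Icc 0 T₀) => hu.1))
  set K : ℝ := max (x p) (x T₀ + Finv T₀) with hK
  have xbound : ∀ t : ℝ, 0 ≤ t → x t ≤ K := by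
    intro t ht
    rcases le_total t T₀ with h | h
    · exact le_trans (hpmax ⟨ht, h⟩) (le_max_left _ _)
    · have h1 := wanti (Set.mem_Ici.mpr (le_refl T₀)) (Set.mem_Ici.mpr h) h
      have h2 := Finv_pos t (le_trans hT₀0.le h)
      simp only at h1
      calc x t ≤ x t + Finv t := by linarith
        _ ≤ x T₀ + Finv T₀ := h1
        _ ≤ K := le_max_right _ _
  have hK0 : 0 < K := lt_of_lt_of_le (xpos 0 le_rfl) (xbound 0 le_rfl)
  -- x tends to 0
  have xsmall : ∀ η : ℝ, 0 < η → ∀ᶠ t in atTop, x t ≤ η := by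
    intro η hη
    rcases lt_or_ge K η with hKη | hKη
    · filter_upwards [eventually_ge_atTop (0:ℝ)] with t ht
      exact le_trans (xbound t ht) hKη.le
    have hη2K : η / 2 ≤ K := by linarith
    obtain ⟨q, hq, hqmin⟩ := (isCompact_Icc (a := η/2) (b := K)).exists_isMinOn
      (Set.nonempty_Icc.mpr hη2K) hf_cont.continuousOn
    set m : ℝ := f q with hm
    have hm0 : 0 < m := fpos q (lt_of_lt_of_le (by linarith) hq.1)
    have hmmin : ∀ y : ℝ, η/2 ≤ y → y ≤ K → m ≤ f y := fun y h1 h2 => hqmin ⟨h1, h2⟩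
    obtain ⟨T₁', hT₁'⟩ := (eventually_atTop).mp
      ((g_to0.eventually (eventually_le_nhds (by positivity : (0:ℝ) < m/2))))
    set T₁ : ℝ := max T₁' 1 with hT₁def
    have hT₁1 : (1:ℝ) ≤ T₁ := le_max_right _ _
    have hT₁0 : (0:ℝ) < T₁ := lt_of_lt_of_le one_pos hT₁1
    have hgsm : ∀ t : ℝ, T₁ ≤ t → g t ≤ m/2 := fun t ht =>
      hT₁' t (le_trans (le_max_left _ _) ht)
    set T₂ : ℝ := T₁ + 2*K/m + 1 with hT₂def
    have hA : 0 < 2*K/m := div_pos (by linarith) hm0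
    have hT₁₂ : T₁ < T₂ := by rw [hT₂def]; linarith
    -- there is a time s in [T₁, T₂] where x s ≤ η/2
    have hdrop : ∃ s ∈ Set.Icc T₁ T₂, x s ≤ η/2 := by
      by_contra hcon
      push_neg at hcon
      have hanti : AntitoneOn (fun t => x t + (m/2)*t) (Set.Icc T₁ T₂) := by
        apply antitoneOn_of_deriv_nonpos (convex_Icc T₁ T₂)
        · exact ((xc.mono (fun u (hu : u ∈ Set.Icc T₁ T₂) =>
            le_trans hT₁0.le hu.1)).add (continuousOn_const.mul continuousOn_id))
        · intro t ht
          rw [interior_Icc] at ht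
          have ht0 : (0:ℝ) < t := lt_trans hT₁0 ht.1
          have hd : HasDerivAt (fun t => x t + m/2 * t) (-f (x t) + g t + m/2 * 1) t :=
            (xd t ht0).add ((hasDerivAt_id t).const_mul (m/2))
          exact hd.differentiableAt.differentiableWithinAt
        · intro t ht
          rw [interior_Icc] at ht
          have ht0 : (0:ℝ) < t := lt_trans hT₁0 ht.1
          have hd : HasDerivAt (fun t => x t + m/2 * t) (-f (x t) + g t + m/2 * 1) t :=
            (xd t ht0).add ((hasDerivAt_id t).const_mul (m/2))
          rw [HasDerivAt.deriv hd]
          have h1 : m ≤ f (x t) := hmmin (x t) (hcon t ⟨ht.1.le, ht.2.le⟩).le (xbound t ht0.le)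
          have h2 := hgsm t ht.1.le
          simp only [mul_one]
          linarith
      have h3 := hanti (Set.mem_Icc.mpr ⟨le_refl T₁, hT₁₂.le⟩)
        (Set.mem_Icc.mpr ⟨hT₁₂.le, le_refl T₂⟩) hT₁₂.le
      simp only at h3
      have h4 : x T₁ ≤ K := xbound T₁ hT₁0.le
      have h5 : 0 < x T₂ := xpos T₂ (by linarith)
      have h6 : m/2 * T₂ - m/2 * T₁ = K + m/2 := by
        rw [hT₂def]
        field_simp
        ring
      nlinarith
    obtain ⟨s, hs, hxs⟩ := hdrop
    have hs0 : 0 < s := lt_of_lt_of_le hT₁0 hs.1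
    -- x stays below η after s
    rw [eventually_atTop]
    refine ⟨s, fun t₁ ht₁ => ?_⟩
    have key := barrier_aux (y := fun t => x t - η) (T := s) (t₁ := t₁) ht₁
      ((xc.mono (fun u (hu : u ∈ Set.Icc s t₁) => le_trans hs0.le hu.1)).sub
        continuousOn_const)
      (by show x s - η ≤ 0; linarith)
      ?_
    · have key' : x t₁ - η ≤ 0 := key
      linarith
    · intro t hts htt1 hcontact
      have hc' : x t - η = 0 := hcontact
      have ht0 : (0:ℝ) < t := lt_of_lt_of_le hs0 hts
      refine ⟨-f (x t) + g t, (xd t ht0).sub_const η, ?_⟩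
      have h1 : m ≤ f (x t) := hmmin (x t) (by linarith) (xbound t ht0.le)
      have h2 : g t ≤ m/2 := hgsm t (le_trans hs.1 hts)
      linarith
  -- condition (M): almost-monotonicity of f near 0
  obtain ⟨δ, hδ, φ, hφmono, hφlim⟩ := hM
  obtain ⟨δ₀, hδ₀, hδ₀prop⟩ : ∃ δ₀ : ℝ, 0 < δ₀ ∧
      ∀ y : ℝ, 0 < y → y < δ₀ → |f y / φ y - 1| < 1/3 := by
    have h1 := Metric.tendsto_nhds.mp hφlim (1/3) (by norm_num)
    rw [eventually_nhdsWithin_iff, Metric.eventually_nhds_iff] at h1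
    obtain ⟨ε, hε, hprop⟩ := h1
    refine ⟨ε, hε, fun y hy1 hy2 => ?_⟩
    have := hprop (y := y) (by rw [Real.dist_eq, sub_zero, abs_of_pos hy1]; exact hy2)
      (Set.mem_Ioi.mpr hy1)
    rwa [Real.dist_eq] at this
  set δ' : ℝ := min δ₀ δ with hδ'def
  have hδ'0 : 0 < δ' := lt_min hδ₀ hδ
  have hbounds : ∀ y : ℝ, 0 < y → y < δ' → 2/3 * φ y < f y ∧ f y < 4/3 * φ y ∧ 0 < φ y := by
    intro y hy1 hy2
    have h1 := hδ₀prop y hy1 (lt_of_lt_of_le hy2 (min_le_left _ _))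
    rw [abs_lt] at h1
    have hfy := fpos y hy1
    have hφy : 0 < φ y := by
      by_contra hc
      push_neg at hc
      have : f y / φ y ≤ 0 := div_nonpos_of_nonneg_of_nonpos hfy.le hc
      linarith [h1.1]
    constructor
    · calc 2/3 * φ y < (f y / φ y) * φ y := by
            apply mul_lt_mul_of_pos_right _ hφy
            linarith [h1.1]
        _ = f y := div_mul_cancel₀ _ hφy.ne'
    refine ⟨?_, hφy⟩
    calc f y = (f y / φ y) * φ y := (div_mul_cancel₀ _ hφy.ne').symm
      _ < 4/3 * φ y := by
          apply mul_lt_mul_of_pos_right _ hφy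
          linarith [h1.2]
  have finc : ∀ y z : ℝ, 0 < y → y ≤ z → z < δ' → f y ≤ 2 * f z := by
    intro y z hy hyz hz
    have hyδ : y < δ' := lt_of_le_of_lt hyz hz
    obtain ⟨hy1, hy2, hy3⟩ := hbounds y hy hyδ
    obtain ⟨hz1, hz2, hz3⟩ := hbounds z (lt_of_lt_of_le hy hyz) hz
    have hφle : φ y ≤ φ z := by
      rcases eq_or_lt_of_le hyz with h | h
      · rw [h]
      · exact (hφmono ⟨hy, lt_of_lt_of_le hyδ (min_le_right _ _)⟩
          ⟨lt_of_lt_of_le hy hyz, lt_of_lt_of_le hz (min_le_right _ _)⟩ h).le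
    nlinarith
  -- main lower bound
  have key : ∀ ε : ℝ, 0 < ε → ε < 1 → ∃ T₃ c : ℝ, 0 < c ∧ 0 < T₃ ∧
      ∀ t : ℝ, T₃ ≤ t → (1 - ε) * (t - T₃) + c ≤ F (x t) := by
    intro ε hε hε1
    -- choose thresholds
    obtain ⟨Ta, hTa⟩ : ∃ Ta : ℝ, ∀ t ≥ Ta, g t ≤ ε/4 * f (Finv t) := by
      have h1 := Metric.tendsto_nhds.mp hL0 (ε/4) (by positivity)
      rw [eventually_atTop] at h1
      obtain ⟨T, hT⟩ := h1
      refine ⟨max T 0, fun t ht => ?_⟩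
      have ht0 : (0:ℝ) ≤ t := le_trans (le_max_right _ _) ht
      have h2 := hT t (le_trans (le_max_left _ _) ht)
      rw [Real.dist_eq, sub_zero] at h2
      have h3 : g t / f (Finv t) < ε/4 := lt_of_le_of_lt (le_abs_self _) h2
      rw [div_lt_iff₀ (fFinv_pos t ht0)] at h3
      linarith
    obtain ⟨Tb, hTb⟩ : ∃ Tb : ℝ, ∀ t ≥ Tb, Finv t < δ' := by
      have h1 := Metric.tendsto_nhds.mp hFinv_to0 δ' hδ'0
      rw [eventually_atTop] at h1
      obtain ⟨T, hT⟩ := h1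
      refine ⟨max T 0, fun t ht => ?_⟩
      have h2 := hT t (le_trans (le_max_left _ _) ht)
      rw [Real.dist_eq, sub_zero, abs_of_pos (Finv_pos t (le_trans (le_max_right _ _) ht))] at h2
      exact h2
    set η : ℝ := min δ' (Finv 0) / 2 with hηdef
    have hη0 : 0 < η := by
      have := Finv_pos 0 le_rfl
      have := lt_min hδ'0 this
      positivity
    have hηδ' : η < δ' := by
      have h1 : min δ' (Finv 0) ≤ δ' := min_le_left _ _
      have h2 : 0 < min δ' (Finv 0) := lt_min hδ'0 (Finv_pos 0 le_rfl)
      rw [hηdef]; linarith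
    have hηF0 : η < Finv 0 := by
      have h1 : min δ' (Finv 0) ≤ Finv 0 := min_le_right _ _
      have h2 : 0 < min δ' (Finv 0) := lt_min hδ'0 (Finv_pos 0 le_rfl)
      rw [hηdef]; linarith
    obtain ⟨Tc, hTc⟩ := eventually_atTop.mp (xsmall η hη0)
    set T₃ : ℝ := max (max Ta Tb) (max Tc 1) with hT₃def
    have hT₃1 : (1:ℝ) ≤ T₃ := le_trans (le_max_right Tc 1) (le_max_right _ _)
    have hT₃0 : (0:ℝ) < T₃ := lt_of_lt_of_le one_pos hT₃1
    have hT₃a : Ta ≤ T₃ := le_trans (le_max_left Ta Tb) (le_max_left _ _)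
    have hT₃b : Tb ≤ T₃ := le_trans (le_max_right Ta Tb) (le_max_left _ _)
    have hT₃c : Tc ≤ T₃ := le_trans (le_max_left Tc 1) (le_max_right _ _)
    have hxT₃ : x T₃ ≤ η := hTc T₃ hT₃c
    have hFxT₃ : 0 < F (x T₃) := by
      have h1 := hF_anti (Set.mem_Ioi.mpr (xpos T₃ hT₃0.le)) (Set.mem_Ioi.mpr (Finv_pos 0 le_rfl))
        (lt_of_le_of_lt hxT₃ hηF0)
      rwa [FFinv 0 le_rfl] at h1
    set c : ℝ := min (F (x T₃)) T₃ with hcdef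
    have hc0 : 0 < c := lt_min hFxT₃ hT₃0
    have hcT₃ : c ≤ T₃ := min_le_right _ _
    have hcF : c ≤ F (x T₃) := min_le_left _ _
    refine ⟨T₃, c, hc0, hT₃0, ?_⟩
    -- barrier comparison with B t = Finv ((1-ε)(t - T₃) + c)
    have hs'pos : ∀ t : ℝ, T₃ ≤ t → 0 < (1 - ε) * (t - T₃) + c := by
      intro t ht
      have : 0 ≤ (1 - ε) * (t - T₃) := mul_nonneg (by linarith) (by linarith)
      linarith
    have hs'le : ∀ t : ℝ, T₃ ≤ t → (1 - ε) * (t - T₃) + c ≤ t := by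
      intro t ht
      nlinarith
    have hcomp : ∀ t : ℝ, T₃ ≤ t → x t ≤ Finv ((1 - ε) * (t - T₃) + c) := by
      intro t₁ ht₁
      have hbar := barrier_aux
        (y := fun t => x t - Finv ((1 - ε) * (t - T₃) + c)) (T := T₃) (t₁ := t₁) ht₁ ?_ ?_ ?_
      · have h' : x t₁ - Finv ((1 - ε) * (t₁ - T₃) + c) ≤ 0 := hbar
        linarith
      · intro t ht
        refine ContinuousWithinAt.sub
          ((xc.mono (fun u (hu : u ∈ Set.Icc T₃ t₁) => le_trans hT₃0.le hu.1)) t ht) ?_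
        have h1 : ContinuousAt (Finv ∘ fun u => (1 - ε) * (u - T₃) + c) t :=
          ContinuousAt.comp (FinvCont _ (hs'pos t ht.1)) (by fun_prop)
        exact h1.continuousWithinAt
      · show x T₃ - Finv ((1 - ε) * (T₃ - T₃) + c) ≤ 0
        rw [sub_self, mul_zero, zero_add]
        have h1 : x T₃ ≤ Finv c := by
          have h2 : Finv (F (x T₃)) ≤ Finv c := Finv_anti c (F (x T₃)) hc0.le hcF
          rwa [FinvF (x T₃) (xpos T₃ hT₃0.le) hFxT₃.le] at h2
        linarith
      · intro t ht htt1 hcontact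
        have hc' : x t - Finv ((1 - ε) * (t - T₃) + c) = 0 := hcontact
        have ht0 : (0:ℝ) < t := lt_of_lt_of_le hT₃0 ht
        have hst : 0 < (1 - ε) * (t - T₃) + c := hs'pos t ht
        have hB : HasDerivAt (fun u => Finv ((1 - ε) * (u - T₃) + c))
            (-f (Finv ((1 - ε) * (t - T₃) + c)) * (1 - ε)) t := by
          have hinner : HasDerivAt (fun u : ℝ => (1 - ε) * (u - T₃) + c) (1 - ε) t := by
            simpa using (((hasDerivAt_id t).sub_const T₃).const_mul (1 - ε)).add_const c
          exact (Finv_deriv _ hst).comp t hinner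
        refine ⟨(-f (x t) + g t) - (-f (Finv ((1 - ε) * (t - T₃) + c)) * (1 - ε)),
          (xd t ht0).sub hB, ?_⟩
        have hxB : x t = Finv ((1 - ε) * (t - T₃) + c) := by linarith
        rw [← hxB]
        -- need g t < ε * f (x t)
        have h1 : g t ≤ ε/4 * f (Finv t) := hTa t (le_trans hT₃a ht)
        have h2 : Finv t ≤ x t := by
          rw [hxB]
          exact Finv_anti _ t hst.le (hs'le t ht)
        have h3 : x t < δ' := lt_of_le_of_lt (hTc t (le_trans hT₃c ht)) hηδ'
        have h4 : f (Finv t) ≤ 2 * f (x t) := finc (Finv t) (x t)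
          (Finv_pos t (le_trans hT₃0.le ht)) h2 h3
        have h5 : 0 < f (x t) := fpos (x t) (xpos t ht0.le)
        nlinarith
    intro t ht
    have h1 := hcomp t ht
    have h2 := Fanti_le (x t) (Finv ((1 - ε) * (t - T₃) + c)) (xpos t (le_trans hT₃0.le ht)) h1
    rwa [FFinv _ (hs'pos t ht).le] at h2
  -- conclusion
  refine tendsto_order.2 ⟨fun a ha => ?_, fun b hb => ?_⟩
  · -- lower bound
    set ε : ℝ := min (1/2) ((1 - a)/2) with hεdef
    have hε0 : 0 < ε := lt_min (by norm_num) (by linarith)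
    have hε1 : ε < 1 := lt_of_le_of_lt (min_le_left _ _) (by norm_num)
    have haε : a < 1 - ε := by
      have h1 : ε ≤ (1 - a)/2 := min_le_right _ _
      linarith
    obtain ⟨T₃, c, hc0, hT₃0, hlow⟩ := key ε hε0 hε1
    set D : ℝ := c - (1 - ε) * T₃ with hDdef
    have htend : Tendsto (fun t : ℝ => (1 - ε) + D * t⁻¹) atTop (nhds (1 - ε)) := by
      have h1 : Tendsto (fun _ : ℝ => (1 - ε)) atTop (nhds (1 - ε)) := tendsto_const_nhds
      have h2 := tendsto_inv_atTop_zero (𝕜 := ℝ) |>.const_mul D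
      simpa using h1.add h2
    have hev := htend.eventually_const_lt haε
    filter_upwards [hev, eventually_ge_atTop (max T₃ 1)] with t ht1 ht2
    have htT₃ : T₃ ≤ t := le_trans (le_max_left _ _) ht2
    have ht0 : (0:ℝ) < t := lt_of_lt_of_le one_pos (le_trans (le_max_right _ _) ht2)
    have h2 := hlow t htT₃
    have h3 : (1 - ε) * t + D ≤ F (x t) := by
      have : (1 - ε) * (t - T₃) + c = (1 - ε) * t + D := by rw [hDdef]; ring
      linarith
    have h4 : (1 - ε) + D * t⁻¹ ≤ F (x t) / t := by
      have h5 : ((1 - ε) * t + D) / t ≤ F (x t) / t := div_le_div_of_nonneg_right h3 ht0.le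
      have h6 : ((1 - ε) * t + D) / t = (1 - ε) + D * t⁻¹ := by field_simp
      linarith
    linarith
  · -- upper bound
    have htend : Tendsto (fun t : ℝ => 1 + C * t⁻¹) atTop (nhds 1) := by
      have h1 : Tendsto (fun _ : ℝ => (1:ℝ)) atTop (nhds 1) := tendsto_const_nhds
      have h2 := tendsto_inv_atTop_zero (𝕜 := ℝ) |>.const_mul C
      simpa using h1.add h2
    have hev := htend.eventually_lt_const hb
    filter_upwards [hev, eventually_ge_atTop (1:ℝ)] with t ht1 ht2
    have ht0 : (0:ℝ) < t := lt_of_lt_of_le one_pos ht2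
    have h2 := uupper t ht0.le
    have h3 : F (x t) / t ≤ (t + C) / t := div_le_div_of_nonneg_right h2 ht0.le
    have h4 : (t + C) / t = 1 + C * t⁻¹ := by field_simp
    linarith
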